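/- Let α satisfy φ < α < 2, where φ = (1 + √5)/2 is the golden ratio, and let n₁, n₂, m₁, m₂ be positive integers with n₁ ≤ (α/(α − 1))·n₂. Then H_α(n₁, m₁) + n₁ + n₂ ≤ G_α(n₁ + n₂, m₁ + m₂), where G_α(n, m) = n·(d_α − 1 + c_α·log₂ m) and H_α(n, m) = n·(d_α + c_α·log₂ m). -/
import Mathlib


open Real

/-- The constant `c_α = (α+1)/((α+1)·log₂(α+1) − α·log₂ α)`. -/
noncomputable def cA (α : ℝ) : ℝ :=
  (α + 1) / ((α + 1) * logb 2 (α + 1) - α * logb 2 α)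

/-- `k₀(α)` is the least `ℓ ∈ ℕ` such that `(α² − α − 1)/(α − 1) ≥ α^(−ℓ)`. -/
noncomputable def k0 (α : ℝ) : ℕ :=
  sInf {ℓ : ℕ | (α ^ 2 - α - 1) / (α - 1) ≥ α ^ (-(ℓ : ℝ))}

/-- The constant `d_α = 2^(k₀(α)+1)·max{k₀(α)+1, 3}·(2α − 1)/(α − 1) + 1`. -/
noncomputable def dA (α : ℝ) : ℝ :=
  2 ^ (k0 α + 1) * max ((k0 α : ℝ) + 1) 3 * (2 * α - 1) / (α - 1) + 1

/-- `G_α(n, m) = n·(d_α − 1 + c_α·log₂ m)`. -/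
noncomputable def G (α : ℝ) (n m : ℕ) : ℝ := (n : ℝ) * (dA α - 1 + cA α * logb 2 m)

/-- `H_α(n, m) = n·(d_α + c_α·log₂ m)`. -/
noncomputable def H (α : ℝ) (n m : ℕ) : ℝ := (n : ℝ) * (dA α + cA α * logb 2 m)

/-- Lemma 17(b): for `φ < α < 2`, if `n₁ ≤ (α/(α−1))·n₂` then
`H_α(n₁,m₁) + n₁ + n₂ ≤ G_α(n₁+n₂, m₁+m₂)`. -/
theorem GHalpha_bound_b (α : ℝ) (hφ : (1 + Real.sqrt 5) / 2 < α) (hα2 : α < 2)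
    (n₁ n₂ m₁ m₂ : ℕ) (hn₁ : 0 < n₁) (hn₂ : 0 < n₂) (hm₁ : 0 < m₁) (hm₂ : 0 < m₂)
    (h : (n₁ : ℝ) ≤ α / (α - 1) * n₂) :
    H α n₁ m₁ + n₁ + n₂ ≤ G α (n₁ + n₂) (m₁ + m₂) := by

  have hs : (2:ℝ) ≤ Real.sqrt 5 := by
    nlinarith [Real.sq_sqrt (by norm_num : (5:ℝ) ≥ 0), Real.sqrt_nonneg 5]
  have hα1 : (1:ℝ) < α := by linarith
  have hα1' : (0:ℝ) < α - 1 := by linarith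
  -- positivity of cA
  have hlogα : 0 < logb 2 α := Real.logb_pos (by norm_num) hα1
  have hlog : logb 2 α < logb 2 (α + 1) :=
    Real.logb_lt_logb (by norm_num) (by linarith) (by linarith)
  have hden : 0 < (α + 1) * logb 2 (α + 1) - α * logb 2 α := by nlinarith
  have hc : 0 < cA α := div_pos (by linarith) hden
  -- dA bound
  have hM : (6:ℝ) ≤ 2 ^ (k0 α + 1) * max ((k0 α : ℝ) + 1) 3 := by
    have h1 : (2:ℝ) ≤ 2 ^ (k0 α + 1) := by
      calc (2:ℝ) = 2 ^ 1 := by norm_num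
      _ ≤ 2 ^ (k0 α + 1) := by
        apply pow_le_pow_right₀ (by norm_num) (by omega)
    have h2 : (3:ℝ) ≤ max ((k0 α : ℝ) + 1) 3 := le_max_right _ _
    nlinarith
  have hkey : dA α * (α - 1) =
      2 ^ (k0 α + 1) * max ((k0 α : ℝ) + 1) 3 * (2 * α - 1) + (α - 1) := by
    rw [dA]; field_simp
  have hd : 2 * (2 * α - 1) ≤ dA α * (α - 1) := by nlinarith
  -- key linear bound
  have hn₂' : (0:ℝ) ≤ (n₂ : ℝ) := Nat.cast_nonneg _
  have hn₁' : (0:ℝ) ≤ (n₁ : ℝ) := Nat.cast_nonneg _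
  have hdiv : (n₁ : ℝ) * (α - 1) ≤ α * n₂ := by
    have := (div_mul_eq_mul_div α (α-1) (n₂:ℝ))
    rw [div_mul_eq_mul_div] at h
    calc (n₁ : ℝ) * (α - 1) ≤ α * n₂ / (α - 1) * (α - 1) := by
          apply mul_le_mul_of_nonneg_right h (le_of_lt hα1')
      _ = α * n₂ := by field_simp
  have hnd : 2 * (n₁:ℝ) + 2 * n₂ ≤ (n₂:ℝ) * dA α := by
    have h1 : (n₂:ℝ) * (2 * (2 * α - 1)) ≤ (n₂:ℝ) * (dA α * (α - 1)) :=
      mul_le_mul_of_nonneg_left hd hn₂'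
    nlinarith
  -- log facts
  have hL1 : (1:ℝ) ≤ logb 2 ((m₁ : ℝ) + m₂) := by
    have h1 : (1:ℝ) ≤ m₁ := by exact_mod_cast hm₁
    have h2 : (1:ℝ) ≤ m₂ := by exact_mod_cast hm₂
    rw [show (1:ℝ) = logb 2 2 by simp]
    exact Real.logb_le_logb_of_le (by norm_num) (by norm_num) (by linarith)
  have hLl : logb 2 (m₁:ℝ) ≤ logb 2 ((m₁:ℝ) + m₂) := by
    have h1 : (0:ℝ) < m₁ := by exact_mod_cast hm₁
    have h2 : (0:ℝ) ≤ m₂ := Nat.cast_nonneg _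
    exact Real.logb_le_logb_of_le (by norm_num) h1 (by linarith)
  -- conclude
  rw [G, H]
  push_cast
  have hA : 0 ≤ cA α * (logb 2 ((m₁:ℝ) + m₂) - logb 2 (m₁:ℝ)) * n₁ :=
    mul_nonneg (mul_nonneg hc.le (by linarith)) hn₁'
  have hB : 0 ≤ cA α * logb 2 ((m₁:ℝ) + m₂) * n₂ :=
    mul_nonneg (mul_nonneg hc.le (by linarith)) hn₂'
  nlinarith [hnd, hA, hB]
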